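/- For k ≥ 2 and H ≥ 2, the number S_k(H) of pairs (x₁,x₂) of positive integers with x₁,x₂ ≤ H and x₁x₂ a perfect k-th power satisfies S_k(H) = H^{2/k} U_k(H) + O(H^{1/k} W_k(H)), where U_k(H) = Σ 1/η(y) and W_k(H) = Σ y^{1/k}/η(y), both sums over k-free y ≤ H with η(y)^k ≤ H·y. -/

import Mathlib

open Filter
open scoped Classical

def radical (n : ℕ) : ℕ := ∏ p ∈ n.primeFactors, p

namespace SkAux

def kfp (k x : ℕ) : ℕ := ∏ p ∈ x.primeFactors, p ^ (x.factorization p % k)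
def kroot (k x : ℕ) : ℕ := ∏ p ∈ x.primeFactors, p ^ (x.factorization p / k)
def conj (k y : ℕ) : ℕ := ∏ p ∈ y.primeFactors, p ^ (k - y.factorization p)

lemma prod_pow_pos (x : ℕ) (f : ℕ → ℕ) : 0 < ∏ p ∈ x.primeFactors, p ^ f p :=
  Finset.prod_pos fun p hp => pow_pos (Nat.prime_of_mem_primeFactors hp).pos _

lemma kfp_pos (k x : ℕ) : 0 < kfp k x := prod_pow_pos x _
lemma kroot_pos (k x : ℕ) : 0 < kroot k x := prod_pow_pos x _
lemma conj_pos (k y : ℕ) : 0 < conj k y := prod_pow_pos y _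

lemma factorization_prod_pow (x : ℕ) (f : ℕ → ℕ) (q : ℕ) :
    (∏ p ∈ x.primeFactors, p ^ f p).factorization q =
      if q ∈ x.primeFactors then f q else 0 := by
  rw [Nat.factorization_prod
      (fun p hp => pow_ne_zero _ (Nat.prime_of_mem_primeFactors hp).pos.ne')]
  rw [Finset.sum_apply']
  by_cases hq : q ∈ x.primeFactors
  · rw [if_pos hq]
    rw [Finset.sum_eq_single_of_mem q hq
        (fun p hp hne => by
          rw [Nat.Prime.factorization_pow (Nat.prime_of_mem_primeFactors hp)]
          exact Finsupp.single_eq_of_ne' hne)]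
    rw [Nat.Prime.factorization_pow (Nat.prime_of_mem_primeFactors hq)]
    exact Finsupp.single_eq_same
  · rw [if_neg hq]
    refine Finset.sum_eq_zero fun p hp => ?_
    rw [Nat.Prime.factorization_pow (Nat.prime_of_mem_primeFactors hp)]
    exact Finsupp.single_eq_of_ne (by rintro rfl; exact hq hp)

lemma mem_primeFactors_iff_fact_ne (x q : ℕ) :
    q ∈ x.primeFactors ↔ x.factorization q ≠ 0 := by
  rw [← Nat.support_factorization, Finsupp.mem_support_iff]

lemma kfp_factorization (k x q : ℕ) :
    (kfp k x).factorization q = x.factorization q % k := by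
  rw [kfp, factorization_prod_pow]
  by_cases hq : q ∈ x.primeFactors
  · rw [if_pos hq]
  · rw [if_neg hq]
    rw [mem_primeFactors_iff_fact_ne, not_not] at hq
    rw [hq, Nat.zero_mod]

lemma kfp_mul_kroot_pow {k x : ℕ} (hx : x ≠ 0) : kfp k x * (kroot k x) ^ k = x := by
  rw [kfp, kroot, ← Finset.prod_pow]
  rw [← Finset.prod_mul_distrib]
  have : ∀ p ∈ x.primeFactors,
      p ^ (x.factorization p % k) * (p ^ (x.factorization p / k)) ^ k
        = p ^ x.factorization p := by
    intro p hp
    rw [← pow_mul, ← pow_add]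
    congr 1
    exact Nat.mod_add_div' _ _
  rw [Finset.prod_congr rfl this]
  conv_rhs => rw [← Nat.factorization_prod_pow_eq_self hx]
  rfl

lemma kfree_iff {k y : ℕ} (hy : y ≠ 0) (hk : 0 < k) :
    (∀ p : ℕ, p.Prime → ¬ p ^ k ∣ y) ↔ ∀ q, y.factorization q < k := by
  constructor
  · intro h q
    by_cases hq : q.Prime
    · by_contra hle
      exact h q hq ((Nat.Prime.pow_dvd_iff_le_factorization hq hy).2 (le_of_not_gt hle))
    · rw [Nat.factorization_eq_zero_of_not_prime _ hq]; exact hk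
  · intro h p hp hdvd
    exact absurd ((Nat.Prime.pow_dvd_iff_le_factorization hp hy).1 hdvd) (not_le.2 (h p))

lemma kfp_kfree {k x : ℕ} (hk : 0 < k) : ∀ p : ℕ, p.Prime → ¬ p ^ k ∣ kfp k x := by
  rw [kfree_iff (kfp_pos k x).ne' hk]
  intro q
  rw [kfp_factorization]
  exact Nat.mod_lt _ hk

lemma eq_of_factorization_eq {a b : ℕ} (ha : a ≠ 0) (hb : b ≠ 0)
    (h : ∀ q, a.factorization q = b.factorization q) : a = b :=
  Nat.factorization_inj ha hb (Finsupp.ext h)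

lemma conj_factorization {k y : ℕ} (q : ℕ) :
    (conj k y).factorization q =
      if q ∈ y.primeFactors then k - y.factorization q else 0 := by
  rw [conj, factorization_prod_pow]

lemma kfp_eq_self {k y : ℕ} (hy : y ≠ 0) (hfree : ∀ q, y.factorization q < k) :
    kfp k y = y := by
  refine eq_of_factorization_eq (kfp_pos k y).ne' hy fun q => ?_
  rw [kfp_factorization, Nat.mod_eq_of_lt (hfree q)]

lemma kfp_mul_pow {k y a : ℕ} (hy : y ≠ 0) (ha : a ≠ 0) :
    kfp k (y * a ^ k) = kfp k y := by
  refine eq_of_factorization_eq (kfp_pos _ _).ne' (kfp_pos _ _).ne' fun q => ?_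
  rw [kfp_factorization, kfp_factorization,
    Nat.factorization_mul hy (pow_ne_zero _ ha), Nat.factorization_pow]
  simp [Nat.add_mul_mod_self_left]

lemma kroot_kfree_mul_pow {k y a : ℕ} (hk : 0 < k) (hy : y ≠ 0)
    (hfree : ∀ q, y.factorization q < k) (ha : a ≠ 0) :
    kroot k (y * a ^ k) = a := by
  have hx : y * a ^ k ≠ 0 := Nat.mul_ne_zero hy (pow_ne_zero _ ha)
  have h0 := kfp_mul_kroot_pow (k := k) hx
  rw [kfp_mul_pow hy ha, kfp_eq_self hy hfree] at h0
  have := Nat.eq_of_mul_eq_mul_left (Nat.pos_of_ne_zero hy) h0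
  exact Nat.pow_left_injective hk.ne' this

lemma mul_conj {k y : ℕ} (hy : y ≠ 0) (hfree : ∀ q, y.factorization q < k) :
    y * conj k y = radical y ^ k := by
  have hy' : (∏ p ∈ y.primeFactors, p ^ y.factorization p) = y := by
    conv_rhs => rw [← Nat.factorization_prod_pow_eq_self hy]
    rfl
  rw [conj, radical]
  nth_rewrite 1 [← hy']
  rw [← Finset.prod_pow, ← Finset.prod_mul_distrib]
  refine Finset.prod_congr rfl fun p hp => ?_
  rw [← pow_add]
  congr 1
  have := hfree p
  omega

lemma conj_primeFactors {k y : ℕ} (hfree : ∀ q, y.factorization q < k) :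
    (conj k y).primeFactors = y.primeFactors := by
  ext q
  rw [mem_primeFactors_iff_fact_ne, mem_primeFactors_iff_fact_ne, conj_factorization]
  by_cases hq : q ∈ y.primeFactors
  · rw [if_pos hq]
    have h1 : y.factorization q ≠ 0 := (mem_primeFactors_iff_fact_ne _ _).1 hq
    have h2 := hfree q
    constructor
    · intro _; exact h1
    · intro _; omega
  · rw [if_neg hq]
    have : y.factorization q = 0 := by
      by_contra h; exact hq ((mem_primeFactors_iff_fact_ne _ _).2 h)
    simp [this]

lemma radical_conj {k y : ℕ} (hfree : ∀ q, y.factorization q < k) :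
    radical (conj k y) = radical y := by
  rw [radical, radical, conj_primeFactors hfree]

lemma conj_kfree {k y : ℕ} (hk : 0 < k) (q : ℕ) : (conj k y).factorization q < k := by
  rw [conj_factorization]
  by_cases hq : q ∈ y.primeFactors
  · rw [if_pos hq]
    have h1 : y.factorization q ≠ 0 := (mem_primeFactors_iff_fact_ne _ _).1 hq
    omega
  · rw [if_neg hq]; exact hk

lemma conj_conj {k y : ℕ} (hy : y ≠ 0) (hfree : ∀ q, y.factorization q < k) :
    conj k (conj k y) = y := by
  refine eq_of_factorization_eq (conj_pos _ _).ne' hy fun q => ?_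
  rw [conj_factorization, conj_primeFactors hfree, conj_factorization]
  by_cases hq : q ∈ y.primeFactors
  · rw [if_pos hq, if_pos hq]
    have h1 : y.factorization q ≠ 0 := (mem_primeFactors_iff_fact_ne _ _).1 hq
    have h2 := hfree q
    omega
  · rw [if_neg hq]
    have : y.factorization q = 0 := by
      by_contra h; exact hq ((mem_primeFactors_iff_fact_ne _ _).2 h)
    omega

lemma pow_fact_dvd {k x : ℕ} (hx : x ≠ 0) (h : ∃ m : ℕ, 0 < m ∧ x = m ^ k) :
    ∀ q, k ∣ x.factorization q := by
  obtain ⟨m, hm, rfl⟩ := h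
  intro q
  rw [Nat.factorization_pow]
  exact Dvd.intro _ rfl

lemma exists_pow_of_fact_dvd {k x : ℕ} (hk : 0 < k) (hx : x ≠ 0)
    (h : ∀ q, k ∣ x.factorization q) : ∃ m : ℕ, 0 < m ∧ x = m ^ k := by
  refine ⟨kroot k x, kroot_pos k x, ?_⟩
  have h0 := kfp_mul_kroot_pow (k := k) hx
  have h1 : kfp k x = 1 := by
    refine eq_of_factorization_eq (kfp_pos _ _).ne' one_ne_zero fun q => ?_
    rw [kfp_factorization, Nat.factorization_one, Nat.mod_eq_zero_of_dvd (h q)]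
    rfl
  rw [h1, one_mul] at h0
  exact h0.symm

lemma kfp_second {k x₁ x₂ : ℕ} (hk : 0 < k) (h1 : x₁ ≠ 0) (h2 : x₂ ≠ 0)
    (h : ∀ q, k ∣ (x₁ * x₂).factorization q) :
    kfp k x₂ = conj k (kfp k x₁) := by
  refine eq_of_factorization_eq (kfp_pos _ _).ne' (conj_pos _ _).ne' fun q => ?_
  rw [kfp_factorization, conj_factorization]
  have hdvd := h q
  rw [Nat.factorization_mul h1 h2, Finsupp.add_apply] at hdvd
  have hd2 : k ∣ x₁.factorization q % k + x₂.factorization q % k := by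
    refine Nat.dvd_of_mod_eq_zero ?_
    rw [← Nat.add_mod]
    exact Nat.mod_eq_zero_of_dvd hdvd
  have hlt1 : x₁.factorization q % k < k := Nat.mod_lt _ hk
  have hlt2 : x₂.factorization q % k < k := Nat.mod_lt _ hk
  have hmem : q ∈ (kfp k x₁).primeFactors ↔ x₁.factorization q % k ≠ 0 := by
    rw [mem_primeFactors_iff_fact_ne, kfp_factorization]
  obtain ⟨c, hc2⟩ := hd2
  have hcases : x₁.factorization q % k + x₂.factorization q % k = 0 ∨
      x₁.factorization q % k + x₂.factorization q % k = k := by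
    rcases c with _ | _ | c
    · omega
    · omega
    · have : k * 2 ≤ k * (c + 1 + 1) := Nat.mul_le_mul_left k (by omega)
      omega
  by_cases hq : q ∈ (kfp k x₁).primeFactors
  · rw [if_pos hq, kfp_factorization]
    have hc : x₁.factorization q % k ≠ 0 := hmem.1 hq
    omega
  · rw [if_neg hq]
    have hc : x₁.factorization q % k = 0 := by
      by_contra hcon; exact hq (hmem.2 hcon)
    omega

lemma radical_pos (y : ℕ) : 0 < radical y :=
  Finset.prod_pos fun p hp => (Nat.prime_of_mem_primeFactors hp).pos

lemma kfp_dvd {k x : ℕ} (hx : x ≠ 0) : kfp k x ∣ x :=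
  ⟨(kroot k x) ^ k, (kfp_mul_kroot_pow hx).symm⟩

lemma card_eq {k : ℕ} (hk : 2 ≤ k) {H : ℝ} (hH : 1 ≤ H) :
    (((Finset.Icc 1 ⌊H⌋₊ ×ˢ Finset.Icc 1 ⌊H⌋₊).filter
        (fun p : ℕ × ℕ => ∃ m : ℕ, 0 < m ∧ p.1 * p.2 = m ^ k)).card
      = ∑ y ∈ (Finset.Icc 1 ⌊H⌋₊).filter
            (fun y : ℕ => (∀ p : ℕ, p.Prime → ¬ p ^ k ∣ y) ∧
              ((radical y : ℝ)) ^ k ≤ H * y),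
          ((Finset.Icc 1 ⌊H⌋₊).filter (fun a => y * a ^ k ≤ ⌊H⌋₊)).card *
          ((Finset.Icc 1 ⌊H⌋₊).filter (fun b => conj k y * b ^ k ≤ ⌊H⌋₊)).card) := by
  have hk0 : 0 < k := by omega
  set N := ⌊H⌋₊ with hN
  have hNH : (N : ℝ) ≤ H := Nat.floor_le (by linarith)
  rw [Finset.card_eq_sum_card_fiberwise (f := fun p : ℕ × ℕ => kfp k p.1)
    (t := (Finset.Icc 1 N).filter
            (fun y : ℕ => (∀ p : ℕ, p.Prime → ¬ p ^ k ∣ y) ∧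
              ((radical y : ℝ)) ^ k ≤ H * y))]
  · refine Finset.sum_congr rfl fun y hy => ?_
    rw [Finset.mem_filter, Finset.mem_Icc] at hy
    obtain ⟨⟨hy1, hyN⟩, hyfree, hyrad⟩ := hy
    have hy0 : y ≠ 0 := by omega
    have hfree' : ∀ q, y.factorization q < k := (kfree_iff hy0 hk0).1 hyfree
    rw [← Finset.card_product]
    refine Finset.card_bij'
      (fun p _ => (kroot k p.1, kroot k p.2))
      (fun q _ => (y * q.1 ^ k, conj k y * q.2 ^ k)) ?_ ?_ ?_ ?_
    · -- hi : image of fiber element lands in A ×ˢ B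
      rintro ⟨x₁, x₂⟩ hp
      simp only [Finset.mem_filter, Finset.mem_product, Finset.mem_Icc] at hp
      obtain ⟨⟨⟨⟨hx1a, hx1b⟩, hx2a, hx2b⟩, m, hm, hmeq⟩, hkfp⟩ := hp
      have h1 : x₁ ≠ 0 := by omega
      have h2 : x₂ ≠ 0 := by omega
      have hconj : kfp k x₂ = conj k y := by
        rw [← hkfp]
        exact kfp_second hk0 h1 h2 (pow_fact_dvd (mul_ne_zero h1 h2) ⟨m, hm, hmeq⟩)
      have he1 : y * (kroot k x₁) ^ k = x₁ := by
        rw [← hkfp]; exact kfp_mul_kroot_pow h1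
      have he2 : conj k y * (kroot k x₂) ^ k = x₂ := by
        rw [← hconj]; exact kfp_mul_kroot_pow h2
      simp only [Finset.mem_product, Finset.mem_filter, Finset.mem_Icc]
      have ha1 : 0 < kroot k x₁ := kroot_pos k x₁
      have hb1 : 0 < kroot k x₂ := kroot_pos k x₂
      refine ⟨⟨⟨ha1, ?_⟩, ?_⟩, ⟨hb1, ?_⟩, ?_⟩
      · calc kroot k x₁ ≤ (kroot k x₁) ^ k := Nat.le_self_pow hk0.ne' _
          _ ≤ y * (kroot k x₁) ^ k := Nat.le_mul_of_pos_left _ (by omega)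
          _ = x₁ := he1
          _ ≤ N := hx1b
      · rw [he1]; exact hx1b
      · calc kroot k x₂ ≤ (kroot k x₂) ^ k := Nat.le_self_pow hk0.ne' _
          _ ≤ conj k y * (kroot k x₂) ^ k := Nat.le_mul_of_pos_left _ (conj_pos k y)
          _ = x₂ := he2
          _ ≤ N := hx2b
      · rw [he2]; exact hx2b
    · -- hj : inverse lands in fiber
      rintro ⟨a, b⟩ hq
      simp only [Finset.mem_product, Finset.mem_filter, Finset.mem_Icc] at hq
      obtain ⟨⟨⟨ha1, haN⟩, hak⟩, ⟨hb1, hbN⟩, hbc⟩ := hq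
      have ha0 : a ≠ 0 := by omega
      have hb0 : b ≠ 0 := by omega
      simp only [Finset.mem_filter, Finset.mem_product, Finset.mem_Icc]
      refine ⟨⟨⟨⟨?_, ?_⟩, ?_, ?_⟩, ?_⟩, ?_⟩
      · exact Nat.one_le_iff_ne_zero.2 (mul_ne_zero hy0 (pow_ne_zero _ ha0))
      · exact hak
      · exact Nat.one_le_iff_ne_zero.2
          (mul_ne_zero (conj_pos k y).ne' (pow_ne_zero _ hb0))
      · exact hbc
      · refine ⟨radical y * (a * b), Nat.mul_pos (radical_pos y) (Nat.mul_pos ha1 hb1), ?_⟩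
        have : y * a ^ k * (conj k y * b ^ k) = (y * conj k y) * (a * b) ^ k := by
          ring
        rw [this, mul_conj hy0 hfree', ← mul_pow]
      · rw [kfp_mul_pow hy0 ha0, kfp_eq_self hy0 hfree']
    · -- left inverse
      rintro ⟨x₁, x₂⟩ hp
      simp only [Finset.mem_filter, Finset.mem_product, Finset.mem_Icc] at hp
      obtain ⟨⟨⟨⟨hx1a, hx1b⟩, hx2a, hx2b⟩, m, hm, hmeq⟩, hkfp⟩ := hp
      have h1 : x₁ ≠ 0 := by omega
      have h2 : x₂ ≠ 0 := by omega
      have hconj : kfp k x₂ = conj k y := by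
        rw [← hkfp]
        exact kfp_second hk0 h1 h2 (pow_fact_dvd (mul_ne_zero h1 h2) ⟨m, hm, hmeq⟩)
      have he1 : y * (kroot k x₁) ^ k = x₁ := by
        rw [← hkfp]; exact kfp_mul_kroot_pow h1
      have he2 : conj k y * (kroot k x₂) ^ k = x₂ := by
        rw [← hconj]; exact kfp_mul_kroot_pow h2
      exact Prod.ext he1 he2
    · -- right inverse
      rintro ⟨a, b⟩ hq
      simp only [Finset.mem_product, Finset.mem_filter, Finset.mem_Icc] at hq
      obtain ⟨⟨⟨ha1, haN⟩, hak⟩, ⟨hb1, hbN⟩, hbc⟩ := hq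
      have ha0 : a ≠ 0 := by omega
      have hb0 : b ≠ 0 := by omega
      have h1 : kroot k (y * a ^ k) = a := kroot_kfree_mul_pow hk0 hy0 hfree' ha0
      have h2 : kroot k (conj k y * b ^ k) = b :=
        kroot_kfree_mul_pow hk0 (conj_pos k y).ne' (conj_kfree hk0) hb0
      exact Prod.ext h1 h2
  · -- fiber map lands in t
    rintro ⟨x₁, x₂⟩ hp
    simp only [Finset.mem_coe, Finset.mem_filter, Finset.mem_product, Finset.mem_Icc] at hp
    obtain ⟨⟨⟨hx1a, hx1b⟩, hx2a, hx2b⟩, m, hm, hmeq⟩ := hp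
    have h1 : x₁ ≠ 0 := by omega
    have h2 : x₂ ≠ 0 := by omega
    have hconj : kfp k x₂ = conj k (kfp k x₁) :=
      kfp_second hk0 h1 h2 (pow_fact_dvd (mul_ne_zero h1 h2) ⟨m, hm, hmeq⟩)
    have hfree' : ∀ q, (kfp k x₁).factorization q < k := by
      intro q; rw [kfp_factorization]; exact Nat.mod_lt _ hk0
    simp only [Finset.mem_coe, Finset.mem_filter, Finset.mem_Icc]
    refine ⟨⟨kfp_pos k x₁, le_trans (Nat.le_of_dvd (by omega) (kfp_dvd h1)) hx1b⟩,
      kfp_kfree hk0, ?_⟩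
    have hnat : radical (kfp k x₁) ^ k = kfp k x₁ * conj k (kfp k x₁) :=
      (mul_conj (kfp_pos k x₁).ne' hfree').symm
    have hc2 : conj k (kfp k x₁) ≤ N := by
      rw [← hconj]
      exact le_trans (Nat.le_of_dvd (by omega) (kfp_dvd h2)) hx2b
    have : (radical (kfp k x₁) : ℝ) ^ k
        = (kfp k x₁ : ℝ) * (conj k (kfp k x₁) : ℝ) := by
      exact_mod_cast congrArg (Nat.cast : ℕ → ℝ) hnat
    rw [this]
    have hcH : (conj k (kfp k x₁) : ℝ) ≤ H := le_trans (by exact_mod_cast hc2) hNH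
    have h0 : (0 : ℝ) ≤ (kfp k x₁ : ℝ) := Nat.cast_nonneg _
    nlinarith

lemma count_card {k : ℕ} (hk0 : 0 < k) {H : ℝ} (hH : 1 ≤ H) {y : ℕ} (hy : 0 < y) :
    ((Finset.Icc 1 ⌊H⌋₊).filter (fun a => y * a ^ k ≤ ⌊H⌋₊)).card
      = ⌊(H / y) ^ (1 / (k : ℝ))⌋₊ := by
  have hH0 : (0 : ℝ) ≤ H := by linarith
  have hy0 : (0 : ℝ) < y := by exact_mod_cast hy
  have hdiv : (0 : ℝ) ≤ H / y := div_nonneg hH0 hy0.le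
  have hkR : (0 : ℝ) < k := by exact_mod_cast hk0
  have hset : (Finset.Icc 1 ⌊H⌋₊).filter (fun a => y * a ^ k ≤ ⌊H⌋₊)
      = Finset.Icc 1 ⌊(H / y) ^ (1 / (k : ℝ))⌋₊ := by
    ext a
    simp only [Finset.mem_filter, Finset.mem_Icc]
    constructor
    · rintro ⟨⟨h1, hN⟩, hyak⟩
      refine ⟨h1, Nat.le_floor ?_⟩
      rw [one_div]
      rw [Real.le_rpow_inv_iff_of_pos (Nat.cast_nonneg a) hdiv hkR]
      rw [Real.rpow_natCast, le_div_iff₀ hy0]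
      have : ((y * a ^ k : ℕ) : ℝ) ≤ H := (Nat.le_floor_iff hH0).1 hyak
      push_cast at this
      linarith
    · rintro ⟨h1, hM⟩
      have haR : (a : ℝ) ≤ (H / y) ^ (1 / (k : ℝ)) :=
        (Nat.le_floor_iff (Real.rpow_nonneg hdiv _)).1 hM
      rw [one_div, Real.le_rpow_inv_iff_of_pos (Nat.cast_nonneg a) hdiv hkR,
        Real.rpow_natCast, le_div_iff₀ hy0] at haR
      have hnat : y * a ^ k ≤ ⌊H⌋₊ := by
        rw [Nat.le_floor_iff hH0]
        push_cast
        linarith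
      refine ⟨⟨h1, ?_⟩, hnat⟩
      calc a ≤ a ^ k := Nat.le_self_pow hk0.ne' _
        _ ≤ y * a ^ k := Nat.le_mul_of_pos_left _ hy
        _ ≤ ⌊H⌋₊ := hnat
  rw [hset, Nat.card_Icc]
  omega

lemma floor_mul_bound {a b : ℝ} (ha : 1 ≤ a) (hb : 1 ≤ b) :
    |(⌊a⌋₊ : ℝ) * ⌊b⌋₊ - a * b| ≤ a + b := by
  have h1 : (⌊a⌋₊ : ℝ) ≤ a := Nat.floor_le (by linarith)
  have h2 : a - 1 ≤ ⌊a⌋₊ := le_of_lt (Nat.sub_one_lt_floor a)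
  have h3 : (⌊b⌋₊ : ℝ) ≤ b := Nat.floor_le (by linarith)
  have h4 : b - 1 ≤ ⌊b⌋₊ := le_of_lt (Nat.sub_one_lt_floor b)
  have h5 : (0 : ℝ) ≤ ⌊a⌋₊ := Nat.cast_nonneg _
  have h6 : (0 : ℝ) ≤ ⌊b⌋₊ := Nat.cast_nonneg _
  rw [abs_le]
  constructor <;> nlinarith

lemma pow_rpow_inv {η : ℕ} {k : ℕ} (hk0 : 0 < k) :
    (((η : ℝ)) ^ k) ^ (1 / (k : ℝ)) = (η : ℝ) := by
  rw [← Real.rpow_natCast (η : ℝ) k, ← Real.rpow_mul (Nat.cast_nonneg η),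
    mul_one_div, div_self (by exact_mod_cast hk0.ne' : (k : ℝ) ≠ 0), Real.rpow_one]

lemma conj_mem_F {k : ℕ} (hk : 2 ≤ k) {H : ℝ} (hH : 1 ≤ H) {y : ℕ}
    (hy : y ∈ (Finset.Icc 1 ⌊H⌋₊).filter
        (fun y : ℕ => (∀ p : ℕ, p.Prime → ¬ p ^ k ∣ y) ∧
          ((radical y : ℝ)) ^ k ≤ H * y)) :
    conj k y ∈ (Finset.Icc 1 ⌊H⌋₊).filter
        (fun y : ℕ => (∀ p : ℕ, p.Prime → ¬ p ^ k ∣ y) ∧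
          ((radical y : ℝ)) ^ k ≤ H * y) := by
  have hk0 : 0 < k := by omega
  rw [Finset.mem_filter, Finset.mem_Icc] at hy ⊢
  obtain ⟨⟨hy1, hyN⟩, hyfree, hyrad⟩ := hy
  have hy0 : y ≠ 0 := by omega
  have hfree' : ∀ q, y.factorization q < k := (kfree_iff hy0 hk0).1 hyfree
  have hmulR : ((y : ℝ)) * (conj k y : ℝ) = ((radical y : ℝ)) ^ k := by
    exact_mod_cast congrArg (Nat.cast : ℕ → ℝ) (mul_conj hy0 hfree')
  have hyR : (0 : ℝ) < y := by exact_mod_cast Nat.pos_of_ne_zero hy0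
  have hcH : (conj k y : ℝ) ≤ H := by
    have : ((y : ℝ)) * (conj k y : ℝ) ≤ H * y := by rw [hmulR]; exact hyrad
    nlinarith
  have hyH : (y : ℝ) ≤ H :=
    le_trans (by exact_mod_cast hyN : (y : ℝ) ≤ (⌊H⌋₊ : ℕ)) (Nat.floor_le (by linarith))
  refine ⟨⟨conj_pos k y, Nat.le_floor hcH⟩, ?_, ?_⟩
  · exact (kfree_iff (conj_pos k y).ne' hk0).2 (conj_kfree hk0)
  · rw [radical_conj hfree']
    rw [← hmulR]
    have hcR : (0 : ℝ) ≤ (conj k y : ℝ) := Nat.cast_nonneg _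
    nlinarith

end SkAux

open SkAux

theorem Sk_eq_main_plus_error (k : ℕ) (hk : 2 ≤ k) :
    (fun H : ℝ =>
        (((Finset.Icc 1 ⌊H⌋₊ ×ˢ Finset.Icc 1 ⌊H⌋₊).filter
            (fun p : ℕ × ℕ => ∃ m : ℕ, 0 < m ∧ p.1 * p.2 = m ^ k)).card : ℝ)
          - H ^ (2 / (k : ℝ)) *
            ∑ y ∈ (Finset.Icc 1 ⌊H⌋₊).filter
                (fun y : ℕ => (∀ p : ℕ, p.Prime → ¬ p ^ k ∣ y) ∧
                  ((radical y : ℝ)) ^ k ≤ H * y),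
              (1 : ℝ) / (radical y))
      =O[atTop] fun H : ℝ =>
        H ^ (1 / (k : ℝ)) *
          ∑ y ∈ (Finset.Icc 1 ⌊H⌋₊).filter
              (fun y : ℕ => (∀ p : ℕ, p.Prime → ¬ p ^ k ∣ y) ∧
                ((radical y : ℝ)) ^ k ≤ H * y),
            (y : ℝ) ^ (1 / (k : ℝ)) / (radical y) := by
  have hk0 : 0 < k := by omega
  have hkR : (0 : ℝ) < k := by exact_mod_cast hk0
  rw [Asymptotics.isBigO_iff]
  refine ⟨2, ?_⟩
  filter_upwards [eventually_ge_atTop (1 : ℝ)] with H hH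
  set F := (Finset.Icc 1 ⌊H⌋₊).filter
      (fun y : ℕ => (∀ p : ℕ, p.Prime → ¬ p ^ k ∣ y) ∧
        ((radical y : ℝ)) ^ k ≤ H * y) with hF
  have hH0 : (0 : ℝ) ≤ H := by linarith
  -- per-element facts
  have hyfacts : ∀ y ∈ F,
      (0 : ℝ) < y ∧ (0 : ℝ) < (conj k y : ℝ) ∧ (0 : ℝ) < (radical y : ℝ) ∧
      ((y : ℝ)) * (conj k y : ℝ) = ((radical y : ℝ)) ^ k ∧
      (y : ℝ) ≤ H ∧ (conj k y : ℝ) ≤ H := by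
    intro y hy
    rw [hF, Finset.mem_filter, Finset.mem_Icc] at hy
    obtain ⟨⟨hy1, hyN⟩, hyfree, hyrad⟩ := hy
    have hy0 : y ≠ 0 := by omega
    have hfree' : ∀ q, y.factorization q < k := (kfree_iff hy0 hk0).1 hyfree
    have hmulR : ((y : ℝ)) * (conj k y : ℝ) = ((radical y : ℝ)) ^ k := by
      exact_mod_cast congrArg (Nat.cast : ℕ → ℝ) (mul_conj hy0 hfree')
    have hyR : (0 : ℝ) < y := by exact_mod_cast Nat.pos_of_ne_zero hy0
    have hcR : (0 : ℝ) < (conj k y : ℝ) := by exact_mod_cast conj_pos k y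
    have hrR : (0 : ℝ) < (radical y : ℝ) := by exact_mod_cast radical_pos y
    have hyH : (y : ℝ) ≤ H :=
      le_trans (by exact_mod_cast hyN : (y : ℝ) ≤ (⌊H⌋₊ : ℕ)) (Nat.floor_le hH0)
    have hcH : (conj k y : ℝ) ≤ H := by
      have : ((y : ℝ)) * (conj k y : ℝ) ≤ H * y := by rw [hmulR]; exact hyrad
      nlinarith
    exact ⟨hyR, hcR, hrR, hmulR, hyH, hcH⟩
  -- the counting identity, cast to ℝ
  have hS : (((Finset.Icc 1 ⌊H⌋₊ ×ˢ Finset.Icc 1 ⌊H⌋₊).filter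
        (fun p : ℕ × ℕ => ∃ m : ℕ, 0 < m ∧ p.1 * p.2 = m ^ k)).card : ℝ)
      = ∑ y ∈ F, ((⌊(H / (y : ℝ)) ^ (1 / (k : ℝ))⌋₊ : ℝ) *
          (⌊(H / (conj k y : ℝ)) ^ (1 / (k : ℝ))⌋₊ : ℝ)) := by
    rw [card_eq hk hH]
    push_cast
    refine Finset.sum_congr rfl fun y hy => ?_
    obtain ⟨hyR, hcR, _, _, _, _⟩ := hyfacts y hy
    have h1 : (0 : ℕ) < y := by exact_mod_cast hyR
    rw [count_card hk0 hH h1, count_card hk0 hH (conj_pos k y)]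
  rw [Real.norm_eq_abs, Real.norm_eq_abs, hS, Finset.mul_sum, ← Finset.sum_sub_distrib]
  -- per-y bound
  have hbound : ∀ y ∈ F,
      |(⌊(H / (y : ℝ)) ^ (1 / (k : ℝ))⌋₊ : ℝ) *
          (⌊(H / (conj k y : ℝ)) ^ (1 / (k : ℝ))⌋₊ : ℝ)
        - H ^ (2 / (k : ℝ)) * ((1 : ℝ) / (radical y))|
        ≤ H ^ (1 / (k : ℝ)) * ((conj k y : ℝ) ^ (1 / (k : ℝ)) / (radical y))
          + H ^ (1 / (k : ℝ)) * ((y : ℝ) ^ (1 / (k : ℝ)) / (radical y)) := by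
    intro y hy
    obtain ⟨hyR, hcR, hrR, hmulR, hyH, hcH⟩ := hyfacts y hy
    set α := (H / (y : ℝ)) ^ (1 / (k : ℝ)) with hα
    set β := (H / (conj k y : ℝ)) ^ (1 / (k : ℝ)) with hβ
    have hα1 : 1 ≤ α := Real.one_le_rpow ((one_le_div hyR).2 hyH) (by positivity)
    have hβ1 : 1 ≤ β := Real.one_le_rpow ((one_le_div hcR).2 hcH) (by positivity)
    have hαval : α = H ^ (1 / (k : ℝ)) * ((conj k y : ℝ) ^ (1 / (k : ℝ)) / (radical y)) := by
      have hrw : H / (y : ℝ) = H * ((conj k y : ℝ) / ((radical y : ℝ)) ^ k) := by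
        rw [← hmulR]; field_simp
      rw [hα, hrw, Real.mul_rpow hH0 (by positivity),
        Real.div_rpow hcR.le (by positivity), pow_rpow_inv hk0]
    have hβval : β = H ^ (1 / (k : ℝ)) * ((y : ℝ) ^ (1 / (k : ℝ)) / (radical y)) := by
      have hrw : H / (conj k y : ℝ) = H * ((y : ℝ) / ((radical y : ℝ)) ^ k) := by
        rw [← hmulR]; field_simp
      rw [hβ, hrw, Real.mul_rpow hH0 (by positivity),
        Real.div_rpow hyR.le (by positivity), pow_rpow_inv hk0]
    have hαβ : α * β = H ^ (2 / (k : ℝ)) * ((1 : ℝ) / (radical y)) := by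
      rw [hα, hβ, ← Real.mul_rpow (by positivity) (by positivity)]
      have hrw : H / (y : ℝ) * (H / (conj k y : ℝ))
          = H ^ (2 : ℕ) / ((radical y : ℝ)) ^ k := by
        rw [← hmulR]; field_simp
      rw [hrw, Real.div_rpow (by positivity) (by positivity), pow_rpow_inv hk0,
        ← Real.rpow_natCast H 2, ← Real.rpow_mul hH0]
      have : (2 : ℕ) * (1 / (k : ℝ)) = 2 / (k : ℝ) := by push_cast; ring
      rw [this, mul_one_div]
    rw [← hαβ, ← hαval, ← hβval]
    exact floor_mul_bound hα1 hβ1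
  calc |∑ y ∈ F, ((⌊(H / (y : ℝ)) ^ (1 / (k : ℝ))⌋₊ : ℝ) *
          (⌊(H / (conj k y : ℝ)) ^ (1 / (k : ℝ))⌋₊ : ℝ)
        - H ^ (2 / (k : ℝ)) * ((1 : ℝ) / (radical y)))|
      ≤ ∑ y ∈ F, |(⌊(H / (y : ℝ)) ^ (1 / (k : ℝ))⌋₊ : ℝ) *
          (⌊(H / (conj k y : ℝ)) ^ (1 / (k : ℝ))⌋₊ : ℝ)
        - H ^ (2 / (k : ℝ)) * ((1 : ℝ) / (radical y))| :=
        Finset.abs_sum_le_sum_abs _ _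
    _ ≤ ∑ y ∈ F, (H ^ (1 / (k : ℝ)) * ((conj k y : ℝ) ^ (1 / (k : ℝ)) / (radical y))
          + H ^ (1 / (k : ℝ)) * ((y : ℝ) ^ (1 / (k : ℝ)) / (radical y))) :=
        Finset.sum_le_sum hbound
    _ = ∑ y ∈ F, H ^ (1 / (k : ℝ)) * ((conj k y : ℝ) ^ (1 / (k : ℝ)) / (radical y))
          + ∑ y ∈ F, H ^ (1 / (k : ℝ)) * ((y : ℝ) ^ (1 / (k : ℝ)) / (radical y)) :=
        Finset.sum_add_distrib
    _ = 2 * |H ^ (1 / (k : ℝ)) *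
          ∑ y ∈ F, (y : ℝ) ^ (1 / (k : ℝ)) / (radical y)| := by
        have hconjsum : ∑ y ∈ F, H ^ (1 / (k : ℝ)) *
              ((conj k y : ℝ) ^ (1 / (k : ℝ)) / (radical y))
            = ∑ y ∈ F, H ^ (1 / (k : ℝ)) * ((y : ℝ) ^ (1 / (k : ℝ)) / (radical y)) := by
          refine Finset.sum_nbij' (conj k) (conj k)
            (fun y hy => conj_mem_F hk hH hy) (fun y hy => conj_mem_F hk hH hy)
            ?_ ?_ ?_
          · intro y hy
            rw [hF, Finset.mem_filter, Finset.mem_Icc] at hy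
            obtain ⟨⟨hy1, _⟩, hyfree, _⟩ := hy
            exact conj_conj (by omega) ((kfree_iff (by omega) hk0).1 hyfree)
          · intro y hy
            rw [hF, Finset.mem_filter, Finset.mem_Icc] at hy
            obtain ⟨⟨hy1, _⟩, hyfree, _⟩ := hy
            exact conj_conj (by omega) ((kfree_iff (by omega) hk0).1 hyfree)
          · intro y hy
            rw [hF, Finset.mem_filter, Finset.mem_Icc] at hy
            obtain ⟨⟨hy1, _⟩, hyfree, _⟩ := hy
            rw [radical_conj ((kfree_iff (by omega) hk0).1 hyfree)]
        rw [hconjsum, ← Finset.mul_sum]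
        have hnn : (0 : ℝ) ≤ H ^ (1 / (k : ℝ)) *
            ∑ y ∈ F, (y : ℝ) ^ (1 / (k : ℝ)) / (radical y) := by
          refine mul_nonneg (Real.rpow_nonneg hH0 _) (Finset.sum_nonneg fun y hy => ?_)
          exact div_nonneg (Real.rpow_nonneg (Nat.cast_nonneg y) _) (Nat.cast_nonneg _)
        rw [abs_of_nonneg hnn]
        ring
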